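/- Let R be a strongly G-graded unital ring such that every R_g is a simple R_e-bimodule and C_R(R_e) = Z(R_e). Then R is a simple ring. -/

import Mathlib

open DirectSum Pointwise

namespace Controlled

variable {G R : Type*} [AddGroup G] [DecidableEq G] [Ring R]

/-- `P` is an `R_e`-sub-bimodule of `R` (w.r.t. the grading `𝒜`, written additively,
so `R_e = 𝒜 0`). -/
def IsSubBimodule (𝒜 : G → AddSubgroup R) (P : AddSubgroup R) : Prop :=
  ∀ a ∈ 𝒜 0, ∀ x ∈ P, a * x ∈ P ∧ x * a ∈ P

/-- The `R_e`-bimodule `R_H = ⊕_{h ∈ H} R_h` (internally, the subgroup generated by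
the `R_h`, `h ∈ H`; the sum is automatically direct). `R_∅ = ⊥ = {0}`. -/
def RH (𝒜 : G → AddSubgroup R) (H : Set G) : AddSubgroup R := ⨆ h ∈ H, 𝒜 h

/-- An `R_e`-bimodule isomorphism between additive subgroups `P` and `Q` of `R`:
an additive equivalence compatible with left and right multiplication by `R_e = 𝒜 0`. -/
structure BimodIso (𝒜 : G → AddSubgroup R) (P Q : AddSubgroup R) where
  toEquiv : P ≃+ Q
  map_left : ∀ (a x : R), a ∈ 𝒜 0 → ∀ (hx : x ∈ P) (hax : a * x ∈ P),
    (toEquiv ⟨a * x, hax⟩ : R) = a * (toEquiv ⟨x, hx⟩ : R)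
  map_right : ∀ (a x : R), a ∈ 𝒜 0 → ∀ (hx : x ∈ P) (hxa : x * a ∈ P),
    (toEquiv ⟨x * a, hxa⟩ : R) = (toEquiv ⟨x, hx⟩ : R) * a

/-- `R` is `G`-controlled: `H ↦ R_H` is a bijection from subsets of `G` onto the
`R_e`-sub-bimodules of `R`, and `R_S ≅ R_T` (as `R_e`-bimodules) iff `S = T`. -/
def IsControlled (𝒜 : G → AddSubgroup R) : Prop :=
  (∀ H : Set G, IsSubBimodule 𝒜 (RH 𝒜 H)) ∧
  Function.Injective (RH 𝒜) ∧
  (∀ P : AddSubgroup R, IsSubBimodule 𝒜 P → ∃ H : Set G, RH 𝒜 H = P) ∧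
  (∀ S T : Set G, Nonempty (BimodIso 𝒜 (RH 𝒜 S) (RH 𝒜 T)) ↔ S = T)

/-- `P` is a (nonzero) simple `R_e`-bimodule contained in `R`. -/
def IsSimpleBimod (𝒜 : G → AddSubgroup R) (P : AddSubgroup R) : Prop :=
  P ≠ ⊥ ∧ ∀ Q : AddSubgroup R, Q ≤ P → IsSubBimodule 𝒜 Q → Q = ⊥ ∨ Q = P

/-- The product `AB` of two additive subgroups of `R`: all finite sums of products. -/
def mulSub (A B : AddSubgroup R) : AddSubgroup R :=
  AddSubgroup.closure ((A : Set R) * (B : Set R))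

/-- `R` is strongly graded: `R_g R_h = R_{g+h}` for all `g, h`. -/
def IsStronglyGraded (𝒜 : G → AddSubgroup R) : Prop :=
  ∀ g h : G, mulSub (𝒜 g) (𝒜 h) = 𝒜 (g + h)

/-- `C_R(R_e) = Z(R_e)` as subsets of `R`. -/
def CentralizerEqCenter (𝒜 : G → AddSubgroup R) : Prop :=
  {x : R | ∀ r ∈ 𝒜 0, x * r = r * x} = {x : R | x ∈ 𝒜 0 ∧ ∀ r ∈ 𝒜 0, x * r = r * x}

/-- A two-sided ideal `I` is graded if each homogeneous component of each of its
elements again lies in `I` (equivalently, `I = ⊕_g (I ∩ R_g)`). -/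
def IsGradedIdeal (𝒜 : G → AddSubgroup R) [GradedRing 𝒜] (I : TwoSidedIdeal R) : Prop :=
  ∀ x ∈ I, ∀ g : G, (DirectSum.decompose 𝒜 x g : R) ∈ I

/-- `R` is graded simple: the only graded two-sided ideals are `{0}` and `R`. -/
def IsGradedSimple (𝒜 : G → AddSubgroup R) [GradedRing 𝒜] : Prop :=
  ∀ I : TwoSidedIdeal R, IsGradedIdeal 𝒜 I → I = ⊥ ∨ I = ⊤

end Controlled

variable {G R : Type*} [AddGroup G] [DecidableEq G] [Ring R]


/-- Component-at-`k` additive hom. -/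
def compHom (𝒜 : G → AddSubgroup R) [GradedRing 𝒜] (k : G) : R →+ R where
  toFun r := (DirectSum.decompose 𝒜 r k : R)
  map_zero' := by simp
  map_add' a b := by
    show (DirectSum.decompose 𝒜 (a + b) k : R) = _
    rw [DirectSum.decompose_add, DirectSum.add_apply, AddSubgroup.coe_add]

lemma comp_mul (𝒜 : G → AddSubgroup R) [GradedRing 𝒜] {i : G} {a b : R}
    (ha : a ∈ 𝒜 i) (hb : b ∈ 𝒜 0) (x : R) (k : G) :
    (DirectSum.decompose 𝒜 (a * x * b) k : R)
      = a * (DirectSum.decompose 𝒜 x (-i + k) : R) * b := by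
  refine DirectSum.Decomposition.inductionOn 𝒜 (motive := fun x =>
    (DirectSum.decompose 𝒜 (a * x * b) k : R)
      = a * (DirectSum.decompose 𝒜 x (-i + k) : R) * b) ?_ ?_ ?_ x
  · simp
  · intro j m
    have hm : a * (m : R) * b ∈ 𝒜 (i + j) := by
      simpa using SetLike.mul_mem_graded (SetLike.mul_mem_graded ha m.2) hb
    by_cases hk : i + j = k
    · subst hk
      rw [DirectSum.decompose_of_mem_same 𝒜 hm, neg_add_cancel_left,
        DirectSum.decompose_of_mem_same 𝒜 m.2]
    · rw [DirectSum.decompose_of_mem_ne 𝒜 hm hk,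
        DirectSum.decompose_of_mem_ne 𝒜 m.2 (fun hj => hk (by rw [hj, add_neg_cancel_left]))]
      simp
  · intro u v hu hv
    have h2 : a * (u + v) * b = a * u * b + a * v * b := by rw [mul_add, add_mul]
    rw [h2, DirectSum.decompose_add, DirectSum.add_apply, AddSubgroup.coe_add, hu, hv,
      DirectSum.decompose_add, DirectSum.add_apply, AddSubgroup.coe_add, mul_add, add_mul]

lemma eq_zero_of_forall (𝒜 : G → AddSubgroup R) [GradedRing 𝒜] {x : R}
    (h : ∀ g, (DirectSum.decompose 𝒜 x g : R) = 0) : x = 0 := by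
  have h1 : DirectSum.decompose 𝒜 x = 0 := DFinsupp.ext fun g => Subtype.ext (h g)
  have := congrArg (DirectSum.decompose 𝒜).symm h1
  simpa using this

lemma key (𝒜 : G → AddSubgroup R) [GradedRing 𝒜]
    (hstrong : Controlled.IsStronglyGraded 𝒜)
    (hsimple0 : Controlled.IsSimpleBimod 𝒜 (𝒜 0))
    (hcen : Controlled.CentralizerEqCenter 𝒜)
    (I : TwoSidedIdeal R) :
    ∀ n (S : Finset G), S.card ≤ n → ∀ x ∈ I, x ≠ 0 →
      (∀ g ∉ S, (DirectSum.decompose 𝒜 x g : R) = 0) → (1 : R) ∈ I := by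
  intro n
  induction n with
  | zero =>
    intro S hS x _ hx0 hsupp
    refine absurd (eq_zero_of_forall 𝒜 fun g => hsupp g ?_) hx0
    rw [Finset.card_eq_zero.mp (Nat.le_zero.mp hS)]
    exact Finset.notMem_empty g
  | succ m ih =>
    intro S hS x hxI hx0 hsupp
    obtain ⟨g, hg⟩ : ∃ g, (DirectSum.decompose 𝒜 x g : R) ≠ 0 := by
      by_contra h
      push_neg at h
      exact hx0 (eq_zero_of_forall 𝒜 h)
    have hgS : g ∈ S := by by_contra h; exact hg (hsupp g h)
    set xg : R := (DirectSum.decompose 𝒜 x g : R) with hxgdef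
    have hxg : xg ∈ 𝒜 g := SetLike.coe_mem _
    -- Step 0 : some `a ∈ 𝒜 (-g)` with `a * xg ≠ 0`
    obtain ⟨a0, ha0, ha0ne⟩ : ∃ a ∈ 𝒜 (-g), a * xg ≠ 0 := by
      by_contra h
      push_neg at h
      have hker : 𝒜 0 ≤ (AddMonoidHom.mulRight xg).ker := by
        rw [← add_neg_cancel g, ← hstrong g (-g)]
        refine (AddSubgroup.closure_le _).2 ?_
        rintro r ⟨d, hd, c, hc, rfl⟩
        simp only [SetLike.mem_coe, AddMonoidHom.mem_ker, AddMonoidHom.coe_mulRight]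
        rw [mul_assoc, h c hc, mul_zero]
      have h1 := hker (SetLike.one_mem_graded 𝒜)
      simp only [AddMonoidHom.mem_ker, AddMonoidHom.coe_mulRight, one_mul] at h1
      exact hg h1
    -- The sub-bimodule of `𝒜 0` generated by `𝒜 (-g) * xg * 𝒜 0`
    set genN : Set R := {r | ∃ a ∈ 𝒜 (-g), ∃ b ∈ 𝒜 0, a * xg * b = r} with hgenN
    set N : AddSubgroup R := AddSubgroup.closure genN with hN
    have hNle : N ≤ 𝒜 0 := by
      refine (AddSubgroup.closure_le _).2 ?_
      rintro r ⟨a, ha, b, hb, rfl⟩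
      simpa using SetLike.mul_mem_graded (SetLike.mul_mem_graded ha hxg) hb
    have hNsub : Controlled.IsSubBimodule 𝒜 N := by
      intro c hc y hy
      constructor
      · refine ((AddSubgroup.closure_le (AddSubgroup.comap (AddMonoidHom.mulLeft c) N)).2 ?_ : N ≤ _) hy
        rintro r ⟨a, ha, b, hb, rfl⟩
        simp only [SetLike.mem_coe, AddSubgroup.mem_comap, AddMonoidHom.coe_mulLeft]
        have h2 : c * (a * xg * b) = (c * a) * xg * b := by rw [← mul_assoc, ← mul_assoc]
        rw [h2]
        exact AddSubgroup.subset_closure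
          ⟨c * a, by simpa using SetLike.mul_mem_graded hc ha, b, hb, rfl⟩
      · refine ((AddSubgroup.closure_le (AddSubgroup.comap (AddMonoidHom.mulRight c) N)).2 ?_ : N ≤ _) hy
        rintro r ⟨a, ha, b, hb, rfl⟩
        simp only [SetLike.mem_coe, AddSubgroup.mem_comap, AddMonoidHom.coe_mulRight]
        have h2 : (a * xg * b) * c = a * xg * (b * c) := by rw [mul_assoc]
        rw [h2]
        exact AddSubgroup.subset_closure
          ⟨a, ha, b * c, by simpa using SetLike.mul_mem_graded hb hc, rfl⟩
    have hNne : N ≠ ⊥ := by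
      intro h
      have h2 : a0 * xg ∈ N := by
        refine AddSubgroup.subset_closure ⟨a0, ha0, 1, SetLike.one_mem_graded 𝒜, mul_one _⟩
      rw [h] at h2
      exact ha0ne (AddSubgroup.mem_bot.mp h2)
    have h1N : (1 : R) ∈ N := by
      rw [(hsimple0.2 N hNle hNsub).resolve_left hNne]
      exact SetLike.one_mem_graded 𝒜
    -- J and its image under the degree-0 component
    set genJ : Set R := {r | ∃ a ∈ 𝒜 (-g), ∃ b ∈ 𝒜 0, a * x * b = r} with hgenJ
    set J : AddSubgroup R := AddSubgroup.closure genJ with hJ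
    have hcomp : ∀ a ∈ 𝒜 (-g), ∀ b ∈ 𝒜 0, compHom 𝒜 0 (a * x * b) = a * xg * b := by
      intro a ha b hb
      show (DirectSum.decompose 𝒜 (a * x * b) 0 : R) = a * xg * b
      rw [comp_mul 𝒜 ha hb x 0, hxgdef, neg_neg, add_zero]
    have hmap : AddSubgroup.map (compHom 𝒜 0) J = N := by
      rw [hJ, AddMonoidHom.map_closure, hN]
      congr 1
      ext r
      constructor
      · rintro ⟨s, ⟨a, ha, b, hb, rfl⟩, rfl⟩
        exact ⟨a, ha, b, hb, (hcomp a ha b hb).symm⟩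
      · rintro ⟨a, ha, b, hb, rfl⟩
        exact ⟨a * x * b, ⟨a, ha, b, hb, rfl⟩, hcomp a ha b hb⟩
    obtain ⟨y, hyJ, hy1⟩ : ∃ y ∈ J, compHom 𝒜 0 y = 1 := by
      rw [← hmap] at h1N
      exact AddSubgroup.mem_map.mp h1N
    have hyI : y ∈ I := by
      let K : AddSubgroup R :=
        { carrier := {r | r ∈ I}
          zero_mem' := I.zero_mem
          add_mem' := fun h1 h2 => I.add_mem h1 h2
          neg_mem' := fun h1 => I.neg_mem h1 }
      refine ((AddSubgroup.closure_le K).2 ?_ : J ≤ K) hyJ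
      rintro r ⟨a, ha, b, hb, rfl⟩
      exact I.mul_mem_right _ _ (I.mul_mem_left _ _ hxI)
    have hysupp : ∀ k, g + k ∉ S → (DirectSum.decompose 𝒜 y k : R) = 0 := by
      intro k hk
      have hker : J ≤ (compHom 𝒜 k).ker := by
        refine (AddSubgroup.closure_le _).2 ?_
        rintro r ⟨a, ha, b, hb, rfl⟩
        simp only [SetLike.mem_coe, AddMonoidHom.mem_ker]
        show (DirectSum.decompose 𝒜 (a * x * b) k : R) = 0
        rw [comp_mul 𝒜 ha hb x k]
        have h3 : (DirectSum.decompose 𝒜 x (- -g + k) : R) = 0 := by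
          rw [neg_neg]; exact hsupp _ hk
        rw [h3, mul_zero, zero_mul]
      exact hker hyJ
    classical
    set S' : Finset G := S.image (fun s => -g + s) with hS'
    have h0S' : (0 : G) ∈ S' := Finset.mem_image.mpr ⟨g, hgS, neg_add_cancel g⟩
    have hyS' : ∀ k, k ∉ S' → (DirectSum.decompose 𝒜 y k : R) = 0 := by
      intro k hk
      exact hysupp k fun hmem =>
        hk (Finset.mem_image.mpr ⟨g + k, hmem, by rw [neg_add_cancel_left]⟩)
    by_cases hcom : ∀ r ∈ 𝒜 0, y * r = r * y
    · have hy0 : y ∈ 𝒜 0 := by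
        have h5 : y ∈ {x : R | x ∈ 𝒜 0 ∧ ∀ r ∈ 𝒜 0, x * r = r * x} := by
          rw [← hcen]; exact hcom
        exact h5.1
      have h6 : y = 1 := (DirectSum.decompose_of_mem_same 𝒜 hy0).symm.trans hy1
      rw [← h6]; exact hyI
    · push_neg at hcom
      obtain ⟨r, hr, hry⟩ := hcom
      have hzI : r * y - y * r ∈ I :=
        I.sub_mem (I.mul_mem_left r y hyI) (I.mul_mem_right y r hyI)
      have hz0 : r * y - y * r ≠ 0 := sub_ne_zero_of_ne fun h => hry h.symm
      have hzcomp : ∀ k, (DirectSum.decompose 𝒜 (r * y - y * r) k : R)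
          = r * (DirectSum.decompose 𝒜 y k : R) - (DirectSum.decompose 𝒜 y k : R) * r := by
        intro k
        have h1 := comp_mul 𝒜 hr (SetLike.one_mem_graded 𝒜) y k
        have h2 := comp_mul 𝒜 (SetLike.one_mem_graded 𝒜) hr y k
        simp only [mul_one, one_mul] at h1 h2
        have hidx : (-(0 : G) + k) = k := by rw [neg_zero, zero_add]
        rw [hidx] at h1 h2
        show compHom 𝒜 k (r * y - y * r) = _
        rw [map_sub]
        show (DirectSum.decompose 𝒜 (r * y) k : R) - (DirectSum.decompose 𝒜 (y * r) k : R) = _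
        rw [h1, h2]
      have hzsupp : ∀ k, k ∉ S'.erase 0 → (DirectSum.decompose 𝒜 (r * y - y * r) k : R) = 0 := by
        intro k hk
        rw [hzcomp k]
        by_cases hk0 : k = 0
        · subst hk0
          have h7 : (DirectSum.decompose 𝒜 y 0 : R) = 1 := hy1
          rw [h7, mul_one, one_mul, sub_self]
        · have h7 : (DirectSum.decompose 𝒜 y k : R) = 0 :=
            hyS' k fun h => hk (Finset.mem_erase.mpr ⟨hk0, h⟩)
          rw [h7, mul_zero, zero_mul, sub_self]
      refine ih (S'.erase 0) ?_ _ hzI hz0 hzsupp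
      have hc1 : S'.card ≤ S.card := Finset.card_image_le
      have hc2 : (S'.erase 0).card = S'.card - 1 := Finset.card_erase_of_mem h0S'
      omega

/-- If `R` is strongly `G`-graded, every `R_g` is a simple
`R_e`-bimodule, and `C_R(R_e) = Z(R_e)`, then `R` is a simple ring. -/
theorem stmt16 (𝒜 : G → AddSubgroup R) [GradedRing 𝒜]
    (hstrong : Controlled.IsStronglyGraded 𝒜)
    (hsimple : ∀ g : G, Controlled.IsSimpleBimod 𝒜 (𝒜 g))
    (hcen : Controlled.CentralizerEqCenter 𝒜) :
    IsSimpleRing R := by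
  classical
  have h10 : (1 : R) ≠ 0 := by
    intro h
    apply (hsimple 0).1
    ext r
    simp only [AddSubgroup.mem_bot]
    constructor
    · intro _
      calc r = r * 1 := (mul_one r).symm
        _ = 0 := by rw [h, mul_zero]
    · rintro rfl; exact (𝒜 0).zero_mem
  haveI : Nontrivial (TwoSidedIdeal R) := by
    refine ⟨⊥, ⊤, fun h => h10 ?_⟩
    have h2 := (TwoSidedIdeal.one_mem_iff (⊥ : TwoSidedIdeal R)).2 h
    exact (TwoSidedIdeal.mem_bot R).mp h2
  refine ⟨⟨fun I => ?_⟩⟩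
  by_cases hI : I = ⊥
  · exact Or.inl hI
  right
  obtain ⟨x, hxI, hx0⟩ : ∃ x, x ∈ I ∧ x ≠ 0 := by
    by_contra h
    push_neg at h
    refine hI (SetLike.ext fun r => ?_)
    rw [TwoSidedIdeal.mem_bot R]
    exact ⟨h r, fun hr => hr ▸ I.zero_mem⟩
  have hsupp : ∀ g ∉ (DirectSum.decompose 𝒜 x).support,
      (DirectSum.decompose 𝒜 x g : R) = 0 := fun g hg => by
    rw [DFinsupp.notMem_support_iff.mp hg]
    rfl
  exact (TwoSidedIdeal.one_mem_iff I).mp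
    (key 𝒜 hstrong (hsimple 0) hcen I _ _ le_rfl x hxI hx0 hsupp)
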